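/- Suppose V_ℂ is the internal direct sum V_ℂ = ⊕_{(p,q)} V^{p,q} of complex subspaces indexed by pairs of integers, with only finitely many nonzero, such that (i) for every integer i the subspace ⊕_{p+q ≤ i} V^{p,q} is stable under σ (equivalently, is the complexification of a real subspace W_i ⊆ V), and (ii) σ(V^{p,q}) ⊆ V^{q,p} + ⊕_{r+s < p+q} V^{r,s} for all p,q. Define W_i := (⊕_{p+q ≤ i} V^{p,q}) ∩ (V ⊗ 1) and F^r := ⊕_{p ≥ r} V^{p,q}. Then (W_∗, F^∗) is an ℝ-mixed Hodge structure on V. -/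

import Mathlib

open TensorProduct

noncomputable section

namespace MHS

instance : RingHomSurjective (starRingEnd ℂ) :=
  ⟨fun x => ⟨star x, star_star x⟩⟩

variable (V : Type*) [AddCommGroup V] [Module ℝ V]

/-- The inclusion `v ↦ 1 ⊗ v` of `V` into its complexification `ℂ ⊗[ℝ] V`. -/
def incl : V →ₗ[ℝ] ℂ ⊗[ℝ] V := TensorProduct.mk ℝ ℂ V 1

/-- Complex conjugation on the complexification `ℂ ⊗[ℝ] V`, as a
conjugate-linear (i.e. `starRingEnd ℂ`-semilinear) map. -/
def conjC : (ℂ ⊗[ℝ] V) →ₛₗ[starRingEnd ℂ] (ℂ ⊗[ℝ] V) where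
  toFun := LinearMap.rTensor V (Complex.conjAe.toLinearMap : ℂ →ₗ[ℝ] ℂ)
  map_add' := fun x y => map_add _ x y
  map_smul' := by
    intro c x
    induction x using TensorProduct.induction_on with
    | zero => simp
    | tmul a v =>
        simp only [TensorProduct.smul_tmul', LinearMap.rTensor_tmul, smul_eq_mul,
          AlgEquiv.toLinearMap_apply, map_mul, starRingEnd_apply]
        rfl
    | add x y hx hy =>
        simp only [smul_add, map_add]
        exact congrArg₂ (· + ·) hx hy

/-- The complexification `W ⊗ ℂ` of a real subspace `W ⊆ V`, as a complex
subspace of `ℂ ⊗[ℝ] V`. -/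
def cx (W : Submodule ℝ V) : Submodule ℂ (ℂ ⊗[ℝ] V) :=
  Submodule.span ℂ (incl V '' (W : Set V))

variable {V}

/-- `(W, F)` is an `ℝ`-mixed Hodge structure on `V`:  `W` is an increasing
exhaustive filtration of `V` by real subspaces, `F` a decreasing exhaustive
filtration of `ℂ ⊗[ℝ] V` by complex subspaces, and for every `n, p` the induced
filtration on `Gr^W_n = (W n ⊗ ℂ)/(W (n-1) ⊗ ℂ)` satisfies the weight `n`
Hodge decomposition conditions (expressed here at the level of preimages in
`W n ⊗ ℂ` of the relevant subspaces of the quotient). -/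
structure IsRMHS (W : ℤ → Submodule ℝ V) (F : ℤ → Submodule ℂ (ℂ ⊗[ℝ] V)) : Prop where
  monoW : Monotone W
  antiF : Antitone F
  w_bot : ∃ a : ℤ, ∀ i ≤ a, W i = ⊥
  w_top : ∃ b : ℤ, ∀ i, b ≤ i → W i = ⊤
  f_top : ∃ a : ℤ, ∀ p ≤ a, F p = ⊤
  f_bot : ∃ b : ℤ, ∀ p, b ≤ p → F p = ⊥
  gr_inf : ∀ n p : ℤ,
      ((F p ⊓ cx V (W n)) ⊔ cx V (W (n-1))) ⊓
        ((((F (n+1-p)).map (conjC V)) ⊓ cx V (W n)) ⊔ cx V (W (n-1)))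
      = cx V (W (n-1))
  gr_sup : ∀ n p : ℤ,
      (F p ⊓ cx V (W n)) ⊔ ((((F (n+1-p)).map (conjC V)) ⊓ cx V (W n)) ⊔ cx V (W (n-1)))
      = cx V (W n)

/-- The subspace `R^{p,q} = (W_{p+q} ⊗ ℂ) ∩ F^p`. -/
def Rpq (W : ℤ → Submodule ℝ V) (F : ℤ → Submodule ℂ (ℂ ⊗[ℝ] V)) (p q : ℤ) :
    Submodule ℂ (ℂ ⊗[ℝ] V) :=
  cx V (W (p + q)) ⊓ F p

/-- The subspace
`L^{p,q} = (W_{p+q} ⊗ ℂ) ∩ σ(F^q) + Σ_{i ≥ 2} (W_{p+q-i} ⊗ ℂ) ∩ σ(F^{q-i+1})`. -/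
def Lpq (W : ℤ → Submodule ℝ V) (F : ℤ → Submodule ℂ (ℂ ⊗[ℝ] V)) (p q : ℤ) :
    Submodule ℂ (ℂ ⊗[ℝ] V) :=
  (cx V (W (p + q)) ⊓ (F q).map (conjC V)) ⊔
    ⨆ i : ℤ, ⨆ _ : 2 ≤ i, (cx V (W (p + q - i)) ⊓ (F (q - i + 1)).map (conjC V))

/-- The Deligne subspace `I^{p,q} = R^{p,q} ∩ L^{p,q}`. -/
def Ipq (W : ℤ → Submodule ℝ V) (F : ℤ → Submodule ℂ (ℂ ⊗[ℝ] V)) (p q : ℤ) :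
    Submodule ℂ (ℂ ⊗[ℝ] V) :=
  Rpq W F p q ⊓ Lpq W F p q


@[simp] lemma conjC_tmul (c : ℂ) (v : V) :
    conjC V (c ⊗ₜ[ℝ] v) = (starRingEnd ℂ c) ⊗ₜ[ℝ] v := rfl

lemma conjC_conjC (z : ℂ ⊗[ℝ] V) : conjC V (conjC V z) = z := by
  induction z using TensorProduct.induction_on with
  | zero => simp
  | tmul a v => simp
  | add x y hx hy => rw [map_add, map_add, hx, hy]

variable (V) in
/-- Real part map. -/
def reT : ℂ ⊗[ℝ] V →ₗ[ℝ] V :=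
  TensorProduct.lift ((LinearMap.lsmul ℝ V).comp Complex.reLm)

variable (V) in
/-- Imaginary part map. -/
def imT : ℂ ⊗[ℝ] V →ₗ[ℝ] V :=
  TensorProduct.lift ((LinearMap.lsmul ℝ V).comp Complex.imLm)

@[simp] lemma reT_tmul (c : ℂ) (v : V) : reT V (c ⊗ₜ[ℝ] v) = c.re • v := rfl
@[simp] lemma imT_tmul (c : ℂ) (v : V) : imT V (c ⊗ₜ[ℝ] v) = c.im • v := rfl
@[simp] lemma incl_apply (v : V) : incl V v = (1 : ℂ) ⊗ₜ[ℝ] v := rfl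

lemma incl_injective : Function.Injective (incl V) := fun a b hab => by
  have := congrArg (reT V) hab
  simpa using this

lemma conjC_incl (v : V) : conjC V (incl V v) = incl V v := by simp

lemma imT_conjC (z : ℂ ⊗[ℝ] V) : imT V (conjC V z) = - imT V z := by
  induction z using TensorProduct.induction_on with
  | zero => simp
  | tmul a v => simp
  | add x y hx hy => rw [map_add, map_add, hx, hy, map_add, neg_add]

lemma decompC (z : ℂ ⊗[ℝ] V) :
    z = incl V (reT V z) + Complex.I • incl V (imT V z) := by
  induction z using TensorProduct.induction_on with
  | zero => simp
  | tmul c v =>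
      simp only [reT_tmul, imT_tmul, incl_apply, TensorProduct.tmul_smul,
        TensorProduct.smul_tmul', smul_eq_mul, mul_one]
      rw [← TensorProduct.add_tmul]
      congr 1
      simp [Complex.real_smul, Complex.ext_iff]
  | add x y hx hy =>
      rw [map_add, map_add, map_add, map_add, smul_add]
      conv_lhs => rw [hx, hy]
      abel

lemma eq_incl_of_fixed {z : ℂ ⊗[ℝ] V} (h : conjC V z = z) : z = incl V (reT V z) := by
  have h1 : imT V z = 0 := by
    have h2 := imT_conjC (V := V) z
    rw [h] at h2
    have h3 : (2 : ℝ) • imT V z = 0 := by rw [two_smul]; nth_rewrite 1 [h2]; abel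
    simpa using (smul_eq_zero.mp h3).resolve_left (by norm_num)
  conv_lhs => rw [decompC z, h1]
  simp

lemma map_conjC_eq_comap (U : Submodule ℂ (ℂ ⊗[ℝ] V)) :
    U.map (conjC V) = U.comap (conjC V) := by
  ext x
  constructor
  · rintro ⟨u, hu, rfl⟩
    simpa [Submodule.mem_comap, conjC_conjC] using hu
  · intro hx
    exact ⟨conjC V x, hx, conjC_conjC x⟩

lemma map_conjC_map_conjC (U : Submodule ℂ (ℂ ⊗[ℝ] V)) :
    (U.map (conjC V)).map (conjC V) = U := by
  ext x
  simp only [map_conjC_eq_comap, Submodule.mem_comap, conjC_conjC]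

lemma mem_of_conjC_mem {U : Submodule ℂ (ℂ ⊗[ℝ] V)} (hU : U.map (conjC V) = U)
    {u : ℂ ⊗[ℝ] V} (hu : u ∈ U) : conjC V u ∈ U := by
  rw [← hU]; exact ⟨u, hu, rfl⟩

lemma cx_comap_eq {U : Submodule ℂ (ℂ ⊗[ℝ] V)} (hU : U.map (conjC V) = U) :
    cx V ((U.restrictScalars ℝ).comap (incl V)) = U := by
  apply le_antisymm
  · rw [cx, Submodule.span_le]
    rintro _ ⟨v, hv, rfl⟩
    exact hv
  · intro u hu
    have hσu : conjC V u ∈ U := mem_of_conjC_mem hU hu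
    set x := ((2 : ℂ)⁻¹) • (u + conjC V u) with hxdef
    set y := (Complex.I * (2 : ℂ)⁻¹) • (conjC V u - u) with hydef
    have hxU : x ∈ U := Submodule.smul_mem _ _ (U.add_mem hu hσu)
    have hyU : y ∈ U := Submodule.smul_mem _ _ (U.sub_mem hσu hu)
    have hxfix : conjC V x = x := by
      rw [hxdef, map_smulₛₗ, map_add, conjC_conjC]
      rw [show (starRingEnd ℂ) ((2:ℂ)⁻¹) = (2:ℂ)⁻¹ by simp [Complex.ext_iff]]
      rw [add_comm]
    have hyfix : conjC V y = y := by
      rw [hydef, map_smulₛₗ, map_sub, conjC_conjC]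
      rw [show (starRingEnd ℂ) (Complex.I * (2:ℂ)⁻¹) = -(Complex.I * (2:ℂ)⁻¹) by
        simp [Complex.ext_iff]]
      rw [neg_smul, ← smul_neg, neg_sub]
    have hxy : x + Complex.I • y = u := by
      rw [hxdef, hydef, smul_smul, ← mul_assoc, Complex.I_mul_I]
      module
    have hxmem : x ∈ cx V ((U.restrictScalars ℝ).comap (incl V)) := by
      rw [eq_incl_of_fixed hxfix]
      refine Submodule.subset_span ⟨reT V x, ?_, rfl⟩
      show incl V (reT V x) ∈ U
      rw [← eq_incl_of_fixed hxfix]; exact hxU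
    have hymem : y ∈ cx V ((U.restrictScalars ℝ).comap (incl V)) := by
      rw [eq_incl_of_fixed hyfix]
      refine Submodule.subset_span ⟨reT V y, ?_, rfl⟩
      show incl V (reT V y) ∈ U
      rw [← eq_incl_of_fixed hyfix]; exact hyU
    rw [← hxy]
    exact add_mem hxmem (Submodule.smul_mem _ _ hymem)

section Internal

variable {ι R M : Type*} [Semiring R] [AddCommMonoid M] [Module R M] [DecidableEq ι]
variable {A : ι → Submodule R M}

lemma mem_biSup_internal (h : DirectSum.IsInternal A) (P : ι → Prop) (x : M) :
    (x ∈ ⨆ i, ⨆ _ : P i, A i) ↔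
      ∀ i, ¬ P i →
        (LinearEquiv.ofBijective (DirectSum.coeLinearMap A) h).symm x i = 0 := by
  set e := LinearEquiv.ofBijective (DirectSum.coeLinearMap A) h with he
  constructor
  · intro hx
    have hK : (⨆ i, ⨆ _ : P i, A i) ≤
        ⨅ i, ⨅ _ : ¬ P i, LinearMap.ker
          ((DirectSum.component R ι (fun i => ↥(A i)) i).comp e.symm.toLinearMap) := by
      refine iSup_le fun j => iSup_le fun hj => ?_
      intro v hv
      simp only [Submodule.mem_iInf]
      intro i hi
      simp only [LinearMap.mem_ker, LinearMap.coe_comp, Function.comp_apply,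
        LinearEquiv.coe_coe, ← DirectSum.apply_eq_component]
      rw [he]
      exact DirectSum.IsInternal.ofBijective_coeLinearMap_of_mem_ne h
        (fun (hne : j = i) => hi (hne ▸ hj)) hv
    intro i hi
    have := hK hx
    simp only [Submodule.mem_iInf] at this
    have := this i hi
    simpa only [LinearMap.mem_ker, LinearMap.coe_comp, Function.comp_apply,
      LinearEquiv.coe_coe, ← DirectSum.apply_eq_component] using this
  · intro hx
    classical
    have hxe : x = DirectSum.coeLinearMap A (e.symm x) := (e.apply_symm_apply x).symm
    rw [hxe, DirectSum.coeLinearMap_eq_dfinsuppSum]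
    rw [DFinsupp.sum]
    refine Submodule.sum_mem _ fun i hi => ?_
    have hPi : P i := by
      by_contra hP
      exact (DFinsupp.mem_support_iff.mp hi) (hx i hP)
    exact Submodule.mem_iSup_of_mem i (Submodule.mem_iSup_of_mem hPi (e.symm x i).2)

lemma biSup_inf_internal (h : DirectSum.IsInternal A) (P Q : ι → Prop) :
    (⨆ i, ⨆ _ : P i, A i) ⊓ (⨆ i, ⨆ _ : Q i, A i)
      = ⨆ i, ⨆ _ : (P i ∧ Q i), A i := by
  ext x
  simp only [Submodule.mem_inf, mem_biSup_internal h]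
  constructor
  · rintro ⟨h1, h2⟩ i hi
    by_cases hP : P i
    · exact h2 i fun hQ => hi ⟨hP, hQ⟩
    · exact h1 i hP
  · intro h1
    exact ⟨fun i hP => h1 i fun hPQ => hP hPQ.1, fun i hQ => h1 i fun hPQ => hQ hPQ.2⟩

end Internal

lemma biSup_mono' {ι α : Type*} [CompleteLattice α] {A : ι → α} {P Q : ι → Prop}
    (h : ∀ i, P i → Q i) : (⨆ i, ⨆ _ : P i, A i) ≤ ⨆ i, ⨆ _ : Q i, A i :=
  iSup_le fun i => iSup_le fun hP => le_iSup_of_le i (le_iSup_of_le (h i hP) le_rfl)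

end MHS

set_option maxHeartbeats 1000000 in
/-- A bigrading `V_ℂ = ⊕ V^{p,q}` (finitely many nonzero)
whose partial sums `⊕_{p+q ≤ i} V^{p,q}` are stable under conjugation and with
`σ(V^{p,q}) ⊆ V^{q,p} + ⊕_{r+s < p+q} V^{r,s}` determines an `ℝ`-mixed Hodge
structure via `W_i := (⊕_{p+q ≤ i} V^{p,q}) ∩ (V ⊗ 1)` and
`F^r := ⊕_{p ≥ r} V^{p,q}`. -/
theorem bigrading_gives_RMHS
    (V : Type*) [AddCommGroup V] [Module ℝ V] [FiniteDimensional ℝ V]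
    (Vpq : ℤ × ℤ → Submodule ℂ (ℂ ⊗[ℝ] V))
    (hfin : {pq : ℤ × ℤ | Vpq pq ≠ ⊥}.Finite)
    (hinternal : DirectSum.IsInternal Vpq)
    (hstable : ∀ i : ℤ,
      (⨆ pq : ℤ × ℤ, ⨆ _ : pq.1 + pq.2 ≤ i, Vpq pq).map (MHS.conjC V) =
        ⨆ pq : ℤ × ℤ, ⨆ _ : pq.1 + pq.2 ≤ i, Vpq pq)
    (hconj : ∀ p q : ℤ, (Vpq (p, q)).map (MHS.conjC V) ≤
      Vpq (q, p) ⊔ ⨆ rs : ℤ × ℤ, ⨆ _ : rs.1 + rs.2 < p + q, Vpq rs)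
    (W : ℤ → Submodule ℝ V)
    (hW : ∀ i : ℤ, W i =
      ((⨆ pq : ℤ × ℤ, ⨆ _ : pq.1 + pq.2 ≤ i, Vpq pq).restrictScalars ℝ).comap
        (MHS.incl V))
    (F : ℤ → Submodule ℂ (ℂ ⊗[ℝ] V))
    (hF : ∀ r : ℤ, F r = ⨆ pq : ℤ × ℤ, ⨆ _ : r ≤ pq.1, Vpq pq) :
    MHS.IsRMHS W F := by
  classical
  have hWS : ∀ n : ℤ, MHS.cx V (W n) = ⨆ pq : ℤ × ℤ, ⨆ _ : pq.1 + pq.2 ≤ n, Vpq pq := by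
    intro n
    rw [hW n]
    exact MHS.cx_comap_eq (hstable n)
  have Tinf : ∀ P Q : ℤ × ℤ → Prop,
      (⨆ pq : ℤ × ℤ, ⨆ _ : P pq, Vpq pq) ⊓ (⨆ pq : ℤ × ℤ, ⨆ _ : Q pq, Vpq pq)
        = ⨆ pq : ℤ × ℤ, ⨆ _ : (P pq ∧ Q pq), Vpq pq :=
    fun P Q => MHS.biSup_inf_internal hinternal P Q
  have Tmono : ∀ {P Q : ℤ × ℤ → Prop}, (∀ i, P i → Q i) →
      (⨆ pq : ℤ × ℤ, ⨆ _ : P pq, Vpq pq) ≤ ⨆ pq : ℤ × ℤ, ⨆ _ : Q pq, Vpq pq :=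
    fun h => MHS.biSup_mono' h
  have Tmem : ∀ (P : ℤ × ℤ → Prop) (pq : ℤ × ℤ), P pq →
      Vpq pq ≤ ⨆ pq : ℤ × ℤ, ⨆ _ : P pq, Vpq pq :=
    fun P pq hpq => le_iSup_of_le pq (le_iSup_of_le hpq le_rfl)
  -- conjugate of V^{r,s} modulo lower weight
  have hVle : ∀ r s : ℤ, Vpq (r, s) ≤
      (Vpq (s, r)).map (MHS.conjC V) ⊔ ⨆ pq : ℤ × ℤ, ⨆ _ : pq.1 + pq.2 ≤ r + s - 1, Vpq pq := by
    intro r s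
    have h1 : ((Vpq (r, s)).map (MHS.conjC V)).map (MHS.conjC V) ≤
        ((Vpq (s, r)) ⊔ ⨆ rs : ℤ × ℤ, ⨆ _ : rs.1 + rs.2 < r + s, Vpq rs).map (MHS.conjC V) :=
      Submodule.map_mono (hconj r s)
    rw [MHS.map_conjC_map_conjC, Submodule.map_sup] at h1
    refine h1.trans (sup_le_sup le_rfl ?_)
    refine le_trans (Submodule.map_mono (Tmono (P := fun i => i.1 + i.2 < r + s)
      (Q := fun i => i.1 + i.2 ≤ r + s - 1) (fun i hi => by omega))) ?_
    exact (hstable (r + s - 1)).le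
  -- conjugation of F q ⊓ S n, upper bound
  have key1 : ∀ n q : ℤ,
      (F q).map (MHS.conjC V) ⊓ (⨆ pq : ℤ × ℤ, ⨆ _ : pq.1 + pq.2 ≤ n, Vpq pq) ≤
        (⨆ pq : ℤ × ℤ, ⨆ _ : (q ≤ pq.2 ∧ pq.1 + pq.2 ≤ n), Vpq pq) ⊔
          ⨆ pq : ℤ × ℤ, ⨆ _ : pq.1 + pq.2 ≤ n - 1, Vpq pq := by
    intro n q
    have e1 : (F q).map (MHS.conjC V) ⊓ (⨆ pq : ℤ × ℤ, ⨆ _ : pq.1 + pq.2 ≤ n, Vpq pq)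
        = ((F q ⊓ ⨆ pq : ℤ × ℤ, ⨆ _ : pq.1 + pq.2 ≤ n, Vpq pq)).map (MHS.conjC V) := by
      rw [MHS.map_conjC_eq_comap (F q ⊓ _), Submodule.comap_inf,
        ← MHS.map_conjC_eq_comap, ← MHS.map_conjC_eq_comap, hstable n]
    rw [e1, hF q, Tinf]
    rw [Submodule.map_iSup]
    refine iSup_le fun pq => ?_
    rw [Submodule.map_iSup]
    refine iSup_le fun hpq => ?_
    obtain ⟨r, s⟩ := pq
    obtain ⟨hq, hn⟩ := hpq
    refine (hconj r s).trans (sup_le ?_ ?_)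
    · exact le_sup_of_le_left (Tmem _ (s, r) ⟨hq, by omega⟩)
    · exact le_sup_of_le_right (Tmono fun i hi => by omega)
  -- lower bound: the weight-n conjugate part is inside (σF q ⊓ S n) ⊔ S (n-1)
  have key2 : ∀ n q : ℤ,
      (⨆ pq : ℤ × ℤ, ⨆ _ : (q ≤ pq.2 ∧ pq.1 + pq.2 ≤ n), Vpq pq) ≤
        ((F q).map (MHS.conjC V) ⊓ ⨆ pq : ℤ × ℤ, ⨆ _ : pq.1 + pq.2 ≤ n, Vpq pq) ⊔
          ⨆ pq : ℤ × ℤ, ⨆ _ : pq.1 + pq.2 ≤ n - 1, Vpq pq := by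
    intro n q
    refine iSup_le fun pq => iSup_le fun hpq => ?_
    obtain ⟨r, s⟩ := pq
    obtain ⟨hq, hn⟩ := hpq
    have h1 : Vpq (r, s) ≤ (F q).map (MHS.conjC V) ⊔
        ⨆ pq : ℤ × ℤ, ⨆ _ : pq.1 + pq.2 ≤ n - 1, Vpq pq := by
      refine (hVle r s).trans (sup_le_sup ?_ (Tmono fun i hi => by omega))
      refine Submodule.map_mono ?_
      rw [hF q]
      exact Tmem _ (s, r) hq
    have h2 : Vpq (r, s) ≤ ⨆ pq : ℤ × ℤ, ⨆ _ : pq.1 + pq.2 ≤ n, Vpq pq :=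
      Tmem _ (r, s) hn
    have h3 := le_inf h2 h1
    rw [inf_comm]
    rw [inf_sup_assoc_of_le _ (Tmono (P := fun i => i.1 + i.2 ≤ n - 1)
      (Q := fun i => i.1 + i.2 ≤ n) fun i hi => by omega)]
    exact h3
  constructor
  -- monoW
  · intro i j hij
    rw [hW i, hW j]
    exact Submodule.comap_mono (Tmono fun pq hpq => hpq.trans hij)
  -- antiF
  · intro i j hij
    rw [hF i, hF j]
    exact Tmono fun pq hpq => hij.trans hpq
  -- w_bot
  · obtain ⟨a, ha⟩ := ((hfin.image fun pq => pq.1 + pq.2)).bddBelow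
    refine ⟨a - 1, fun i hi => ?_⟩
    rw [hW i]
    have hS : (⨆ pq : ℤ × ℤ, ⨆ _ : pq.1 + pq.2 ≤ i, Vpq pq) = ⊥ := by
      refine le_bot_iff.mp (iSup_le fun pq => iSup_le fun hpq => ?_)
      by_cases hb : Vpq pq = ⊥
      · exact hb.le
      · have : a ≤ pq.1 + pq.2 := ha ⟨pq, hb, rfl⟩
        omega
    rw [hS]
    rw [Submodule.eq_bot_iff]
    intro v hv
    refine MHS.incl_injective (V := V) ?_
    simpa using hv
  -- w_top
  · obtain ⟨b, hb⟩ := ((hfin.image fun pq => pq.1 + pq.2)).bddAbove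
    refine ⟨b, fun i hbi => ?_⟩
    rw [hW i]
    have hS : (⨆ pq : ℤ × ℤ, ⨆ _ : pq.1 + pq.2 ≤ i, Vpq pq) = ⊤ := by
      rw [← hinternal.submodule_iSup_eq_top]
      refine le_antisymm (iSup_le fun pq => iSup_le fun _ => le_iSup Vpq pq) (iSup_le fun pq => ?_)
      by_cases hbot : Vpq pq = ⊥
      · rw [hbot]; exact bot_le
      · have : pq.1 + pq.2 ≤ b := hb ⟨pq, hbot, rfl⟩
        exact Tmem _ pq (this.trans hbi)
    rw [hS]
    ext v
    simp
  -- f_top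
  · obtain ⟨a, ha⟩ := ((hfin.image fun pq => pq.1)).bddBelow
    refine ⟨a, fun p hp => ?_⟩
    rw [hF p]
    rw [← hinternal.submodule_iSup_eq_top]
    refine le_antisymm (iSup_le fun pq => iSup_le fun _ => le_iSup Vpq pq) (iSup_le fun pq => ?_)
    by_cases hbot : Vpq pq = ⊥
    · rw [hbot]; exact bot_le
    · have : a ≤ pq.1 := ha ⟨pq, hbot, rfl⟩
      exact Tmem _ pq (hp.trans this)
  -- f_bot
  · obtain ⟨b, hb⟩ := ((hfin.image fun pq => pq.1)).bddAbove
    refine ⟨b + 1, fun p hp => ?_⟩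
    rw [hF p]
    refine le_bot_iff.mp (iSup_le fun pq => iSup_le fun hpq => ?_)
    by_cases hbot : Vpq pq = ⊥
    · exact hbot.le
    · have : pq.1 ≤ b := hb ⟨pq, hbot, rfl⟩
      omega
  -- gr_inf
  · intro n p
    rw [hWS n, hWS (n - 1)]
    apply le_antisymm
    · have hA : (F p ⊓ ⨆ pq : ℤ × ℤ, ⨆ _ : pq.1 + pq.2 ≤ n, Vpq pq) ⊔
          (⨆ pq : ℤ × ℤ, ⨆ _ : pq.1 + pq.2 ≤ n - 1, Vpq pq) ≤
            ⨆ pq : ℤ × ℤ, ⨆ _ : ((p ≤ pq.1 ∧ pq.1 + pq.2 ≤ n) ∨ pq.1 + pq.2 ≤ n - 1), Vpq pq := by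
        rw [hF p, Tinf]
        exact sup_le (Tmono fun i h => Or.inl h) (Tmono fun i h => Or.inr h)
      have hB : ((F (n + 1 - p)).map (MHS.conjC V) ⊓
            ⨆ pq : ℤ × ℤ, ⨆ _ : pq.1 + pq.2 ≤ n, Vpq pq) ⊔
          (⨆ pq : ℤ × ℤ, ⨆ _ : pq.1 + pq.2 ≤ n - 1, Vpq pq) ≤
            ⨆ pq : ℤ × ℤ,
              ⨆ _ : ((n + 1 - p ≤ pq.2 ∧ pq.1 + pq.2 ≤ n) ∨ pq.1 + pq.2 ≤ n - 1), Vpq pq :=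
        sup_le ((key1 n (n + 1 - p)).trans
          (sup_le (Tmono fun i h => Or.inl h) (Tmono fun i h => Or.inr h)))
          (Tmono fun i h => Or.inr h)
      refine le_trans (inf_le_inf hA hB) ?_
      rw [Tinf]
      exact Tmono fun i h => by omega
    · exact le_inf le_sup_right le_sup_right
  -- gr_sup
  · intro n p
    rw [hWS n, hWS (n - 1)]
    apply le_antisymm
    · exact sup_le inf_le_right
        (sup_le inf_le_right (Tmono fun i h => by omega))
    · refine iSup_le fun pq => iSup_le fun hpq => ?_
      obtain ⟨r, s⟩ := pq
      by_cases hp : p ≤ r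
      · refine le_sup_of_le_left (le_inf ?_ (Tmem _ (r, s) hpq))
        rw [hF p]
        exact Tmem _ (r, s) hp
      · rcases (by omega : r + s ≤ n - 1 ∨ (n + 1 - p ≤ s ∧ r + s ≤ n)) with h | h
        · exact le_sup_of_le_right (le_sup_of_le_right (Tmem _ (r, s) h))
        · exact le_sup_of_le_right ((Tmem _ (r, s) h).trans (key2 n (n + 1 - p)))
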